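/- For every real number b, 1 + b·r(b) − r(b)² > 0; equivalently, r(b)·(r(b) − b) < 1. -/

import Mathlib

open MeasureTheory Filter

/-- Standard normal density. -/
noncomputable def phi (x : ℝ) : ℝ := Real.exp (-x ^ 2 / 2) / Real.sqrt (2 * Real.pi)

/-- Standard normal cumulative distribution function. -/
noncomputable def Phi (x : ℝ) : ℝ := ∫ t in Set.Iio x, phi t

/-- Mills-type ratio. -/
noncomputable def r (b : ℝ) : ℝ := phi b / Phi (-b)

/-- The deficit transformation `F`. -/
noncomputable def F (b : ℝ) : ℝ := phi b / Phi (-b) - b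

open Set Real Topology

lemma phi_eq (x : ℝ) : phi x = (Real.sqrt (2 * Real.pi))⁻¹ * Real.exp (-(2⁻¹ : ℝ) * x ^ 2) := by
  rw [phi, div_eq_mul_inv, mul_comm]
  congr 1
  ring_nf

lemma phi_pos (x : ℝ) : 0 < phi x := by
  rw [phi]; positivity

lemma phi_neg (x : ℝ) : phi (-x) = phi x := by simp [phi]

lemma continuous_phi : Continuous phi := by
  unfold phi; fun_prop

lemma integrable_phi : Integrable phi := by
  have h := (integrable_exp_neg_mul_sq (show (0:ℝ) < 2⁻¹ by norm_num)).const_mul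
    (Real.sqrt (2 * Real.pi))⁻¹
  have : phi = fun x => (Real.sqrt (2 * Real.pi))⁻¹ * Real.exp (-(2⁻¹:ℝ) * x ^ 2) :=
    funext phi_eq
  rw [this]; exact h

lemma integrable_mul_phi : Integrable (fun t => t * phi t) := by
  have h := (integrable_mul_exp_neg_mul_sq (show (0:ℝ) < 2⁻¹ by norm_num)).const_mul
    (Real.sqrt (2 * Real.pi))⁻¹
  have : (fun t => t * phi t)
      = fun x => (Real.sqrt (2 * Real.pi))⁻¹ * (x * Real.exp (-(2⁻¹:ℝ) * x ^ 2)) := by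
    funext x; rw [phi_eq]; ring
  rw [this]; exact h

lemma hasDerivAt_phi (x : ℝ) : HasDerivAt phi (-x * phi x) x := by
  have h1 : HasDerivAt (fun x : ℝ => -x ^ 2 / 2) (-x) x := by
    have := ((hasDerivAt_pow 2 x).neg).div_const 2
    simpa using this.congr_deriv (by ring)
  have h2 := (h1.exp).div_const (Real.sqrt (2 * Real.pi))
  exact (h2 : HasDerivAt phi _ x).congr_deriv (by rw [phi]; ring)

lemma Phi_sub (a b : ℝ) : Phi b - Phi a = ∫ t in a..b, phi t := by
  rw [Phi, Phi, ← integral_Iic_eq_integral_Iio, ← integral_Iic_eq_integral_Iio]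
  exact intervalIntegral.integral_Iic_sub_Iic integrable_phi.integrableOn
    integrable_phi.integrableOn

lemma Phi_nonneg (x : ℝ) : 0 ≤ Phi x :=
  setIntegral_nonneg measurableSet_Iio fun t _ => (phi_pos t).le

lemma Phi_pos (x : ℝ) : 0 < Phi x := by
  have h1 : Phi x = Phi (x - 1) + ∫ t in (x-1)..x, phi t := by
    rw [← Phi_sub]; ring
  have h2 : 0 < ∫ t in (x-1)..x, phi t :=
    intervalIntegral.intervalIntegral_pos_of_pos
      (continuous_phi.intervalIntegrable _ _) phi_pos (by linarith)
  have := Phi_nonneg (x - 1)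
  linarith

lemma hasDerivAt_Phi (x : ℝ) : HasDerivAt Phi (phi x) x := by
  have key : Phi = fun y => Phi 0 + ∫ t in (0:ℝ)..y, phi t := by
    funext y; rw [← Phi_sub]; ring
  rw [key]
  exact (intervalIntegral.integral_hasDerivAt_right
    (continuous_phi.intervalIntegrable _ _)
    (continuous_phi.stronglyMeasurableAtFilter _ _)
    continuous_phi.continuousAt).const_add _

lemma hasDerivAt_Phi_neg (b : ℝ) : HasDerivAt (fun b => Phi (-b)) (-phi b) b := by
  have := (hasDerivAt_Phi (-b)).comp b (hasDerivAt_neg b)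
  simpa [phi_neg, Function.comp_def] using this

lemma Phi_neg_repr (b : ℝ) : Phi (-b) = ∫ t in Ioi b, phi t := by
  have h1 : (∫ t in Ioi b, phi t) = ∫ t in Ioi b, phi (-t) := by
    simp [phi_neg]
  rw [h1, integral_comp_neg_Ioi, integral_Iic_eq_integral_Iio, Phi]

lemma tendsto_phi : Tendsto phi atTop (𝓝 0) := by
  have h1 : Tendsto (fun x : ℝ => -x ^ 2 / 2) atTop atBot := by
    apply Tendsto.atBot_div_const two_pos
    exact tendsto_neg_atBot_iff.mpr (tendsto_pow_atTop two_ne_zero)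
  have h2 : Tendsto (fun x : ℝ => Real.exp (-x ^ 2 / 2)) atTop (𝓝 0) :=
    Real.tendsto_exp_atBot.comp h1
  have h3 : Tendsto phi atTop (𝓝 (0 / Real.sqrt (2 * Real.pi))) :=
    h2.div_const (Real.sqrt (2 * Real.pi))
  simpa using h3

lemma tendsto_mul_phi : Tendsto (fun b => b * phi b) atTop (𝓝 0) := by
  have key : Tendsto (fun b : ℝ => b * Real.exp (-(2⁻¹:ℝ) * b ^ 2)) atTop (𝓝 0) := by
    apply squeeze_zero' (g := fun b : ℝ => b * Real.exp (-b))
    · filter_upwards [eventually_ge_atTop (0:ℝ)] with b hb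
      positivity
    · filter_upwards [eventually_ge_atTop (2:ℝ)] with b hb
      have hb0 : (0:ℝ) ≤ b := by linarith
      have : -(2⁻¹:ℝ) * b ^ 2 ≤ -b := by nlinarith
      exact mul_le_mul_of_nonneg_left (Real.exp_le_exp.mpr this) hb0
    · simpa using tendsto_pow_mul_exp_neg_atTop_nhds_zero 1
  have h2 := key.const_mul (Real.sqrt (2 * Real.pi))⁻¹
  rw [mul_zero] at h2
  apply h2.congr
  intro b; rw [phi_eq]; ring

lemma integral_mul_phi_Ioi (b : ℝ) : ∫ t in Ioi b, t * phi t = phi b := by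
  have h := integral_Ioi_of_hasDerivAt_of_tendsto (f := fun t => -phi t)
    (f' := fun t => t * phi t) (a := b) (m := 0)
    (continuous_phi.neg.continuousWithinAt)
    (fun x _ => by exact (hasDerivAt_phi x).neg.congr_deriv (by ring))
    integrable_mul_phi.integrableOn
    (by simpa using tendsto_phi.neg)
  simpa using h

lemma mul_Phi_neg_le (b : ℝ) (hb : 0 < b) : b * Phi (-b) ≤ phi b := by
  rw [Phi_neg_repr, ← integral_const_mul, ← integral_mul_phi_Ioi b]
  apply setIntegral_mono_on (integrable_phi.const_mul b).integrableOn
    integrable_mul_phi.integrableOn measurableSet_Ioi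
  intro t ht
  exact mul_le_mul_of_nonneg_right (le_of_lt ht) (phi_pos t).le

lemma Phi_neg_nonneg (b : ℝ) : 0 ≤ Phi (-b) := (Phi_pos _).le

lemma tendsto_Phi_neg : Tendsto (fun b => Phi (-b)) atTop (𝓝 0) := by
  apply squeeze_zero' (g := phi)
    (Eventually.of_forall fun b => Phi_neg_nonneg b) _ tendsto_phi
  filter_upwards [eventually_ge_atTop (1:ℝ)] with b hb
  calc Phi (-b) ≤ b * Phi (-b) := le_mul_of_one_le_left (Phi_neg_nonneg b) hb
    _ ≤ phi b := mul_Phi_neg_le b (by linarith)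

lemma tendsto_mul_Phi_neg : Tendsto (fun b => b * Phi (-b)) atTop (𝓝 0) := by
  apply squeeze_zero' (g := phi) _ _ tendsto_phi
  · filter_upwards [eventually_ge_atTop (0:ℝ)] with b hb
    exact mul_nonneg hb (Phi_neg_nonneg b)
  · filter_upwards [eventually_gt_atTop (0:ℝ)] with b hb
    exact mul_Phi_neg_le b hb

lemma tendsto_sq_mul_Phi_neg : Tendsto (fun b => b ^ 2 * Phi (-b)) atTop (𝓝 0) := by
  apply squeeze_zero' (g := fun b => b * phi b) _ _ tendsto_mul_phi
  · filter_upwards [eventually_ge_atTop (0:ℝ)] with b _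
    exact mul_nonneg (sq_nonneg b) (Phi_neg_nonneg b)
  · filter_upwards [eventually_gt_atTop (0:ℝ)] with b hb
    have := mul_Phi_neg_le b hb
    calc b ^ 2 * Phi (-b) = b * (b * Phi (-b)) := by ring
      _ ≤ b * phi b := mul_le_mul_of_nonneg_left this hb.le

lemma pos_of_hasDerivAt_neg_tendsto {f f' : ℝ → ℝ} (hd : ∀ x, HasDerivAt f (f' x) x)
    (hneg : ∀ x, f' x < 0) (hlim : Tendsto f atTop (𝓝 0)) (b : ℝ) : 0 < f b := by
  have hanti : StrictAnti f := strictAnti_of_deriv_neg fun x => by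
    rw [(hd x).deriv]; exact hneg x
  have h1 : 0 ≤ f (b + 1) := by
    apply le_of_tendsto hlim
    filter_upwards [eventually_ge_atTop (b + 1)] with c hc
    exact hanti.antitone hc
  have := hanti (lt_add_one b)
  linarith

lemma m_pos (b : ℝ) : 0 < phi b - b * Phi (-b) := by
  apply pos_of_hasDerivAt_neg_tendsto (f := fun b => phi b - b * Phi (-b))
    (f' := fun b => -Phi (-b))
  · intro x
    have h := (hasDerivAt_phi x).sub ((hasDerivAt_id' x).mul (hasDerivAt_Phi_neg x))
    exact h.congr_deriv (by ring)
  · intro x; simpa using Phi_pos (-x)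
  · simpa using tendsto_phi.sub tendsto_mul_Phi_neg

lemma k_pos (b : ℝ) : 0 < (1 + b ^ 2) * Phi (-b) - b * phi b := by
  apply pos_of_hasDerivAt_neg_tendsto (f := fun b => (1 + b ^ 2) * Phi (-b) - b * phi b)
    (f' := fun b => -2 * (phi b - b * Phi (-b)))
  · intro x
    have hsq : HasDerivAt (fun y : ℝ => 1 + y ^ 2) (2 * x) x := by
      simpa using (hasDerivAt_pow 2 x).const_add 1
    have h := (hsq.mul (hasDerivAt_Phi_neg x)).sub
      ((hasDerivAt_id' x).mul (hasDerivAt_phi x))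
    exact h.congr_deriv (by ring)
  · intro x
    have := m_pos x
    linarith
  · have h1 : Tendsto (fun b => Phi (-b) + b ^ 2 * Phi (-b) - b * phi b) atTop (𝓝 0) := by
      simpa using (tendsto_Phi_neg.add tendsto_sq_mul_Phi_neg).sub tendsto_mul_phi
    apply h1.congr
    intro b; ring

lemma h_pos (b : ℝ) : 0 < Phi (-b) ^ 2 + b * phi b * Phi (-b) - phi b ^ 2 := by
  apply pos_of_hasDerivAt_neg_tendsto
    (f := fun b => Phi (-b) ^ 2 + b * phi b * Phi (-b) - phi b ^ 2)
    (f' := fun b => -phi b * ((1 + b ^ 2) * Phi (-b) - b * phi b))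
  · intro x
    have h1 := ((hasDerivAt_Phi_neg x).pow 2).add
      ((((hasDerivAt_id' x).mul (hasDerivAt_phi x)).mul (hasDerivAt_Phi_neg x)))
    have h := h1.sub ((hasDerivAt_phi x).pow 2)
    exact h.congr_deriv (by simp only [Pi.mul_apply]; ring)
  · intro x
    have hk := k_pos x
    have hp := phi_pos x
    have : 0 < phi x * ((1 + x ^ 2) * Phi (-x) - x * phi x) := mul_pos hp hk
    linarith
  · have h1 : Tendsto (fun b => Phi (-b) * Phi (-b) + b * phi b * Phi (-b) - phi b * phi b)
        atTop (𝓝 0) := by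
      simpa using ((tendsto_Phi_neg.mul tendsto_Phi_neg).add
        (tendsto_mul_phi.mul tendsto_Phi_neg)).sub (tendsto_phi.mul tendsto_phi)
    apply h1.congr
    intro b; ring

/-- For every real `b`, `1 + b·r(b) − r(b)² > 0`; equivalently `r(b)·(r(b) − b) < 1`. -/
theorem truncated_variance_pos (b : ℝ) :
    0 < 1 + b * r b - r b ^ 2 ∧ r b * (r b - b) < 1 := by
  have hP : 0 < Phi (-b) := Phi_pos (-b)
  have hh := h_pos b
  have key : 1 + b * r b - r b ^ 2
      = (Phi (-b) ^ 2 + b * phi b * Phi (-b) - phi b ^ 2) / Phi (-b) ^ 2 := by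
    rw [r]; field_simp
  have h1 : 0 < 1 + b * r b - r b ^ 2 := by
    rw [key]; positivity
  refine ⟨h1, ?_⟩
  nlinarith [h1]
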